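/- If f : ℂ → ℂ is (2k-2)-times differentiable, then applying the squared Vandermonde differential operator Δ(d/dL)^2 to ∏_{i=1}^k f(L_i) and then setting all L_i = L yields k! · det_{k×k}( f^{(i+j-2)}(L) ). -/

import Mathlib

open Finset

open Finset

/-- Partial derivative in the `i`-th coordinate of a function of `k` complex variables. -/
noncomputable def pderivCoord {k : ℕ} (i : Fin k) (g : (Fin k → ℂ) → ℂ) :
    (Fin k → ℂ) → ℂ :=
  fun x => deriv (fun t => g (Function.update x i t)) (x i)

/-- Apply the operator `∏ i (∂/∂L_i)^(m i)` to `g`. -/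
noncomputable def applyPows {k : ℕ} (m : Fin k → ℕ) (g : (Fin k → ℂ) → ℂ) :
    (Fin k → ℂ) → ℂ :=
  (List.finRange k).foldr (fun i F => (pderivCoord i)^[m i] ∘ F) id g

/-- The Vandermonde differential operator
`Δ(d/dL) = det ((∂/∂L_i)^(j-1)) = ∏_{i<j} (∂/∂L_j - ∂/∂L_i)`. -/
noncomputable def vandermondeOp {k : ℕ} (g : (Fin k → ℂ) → ℂ) : (Fin k → ℂ) → ℂ :=
  fun x => ∑ σ : Equiv.Perm (Fin k),
    (Equiv.Perm.sign σ : ℤ) • applyPows (fun i => (σ i : ℕ)) g x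

/-- Sums of products of single-variable functions. -/
noncomputable def sumProd {k : ℕ} {α : Type*} [Fintype α] (c : α → ℂ)
    (g : α → Fin k → ℂ → ℂ) : (Fin k → ℂ) → ℂ :=
  fun x => ∑ σ : α, c σ * ∏ i, g σ i (x i)

lemma sumProd_congr {k : ℕ} {α : Type*} [Fintype α] (c : α → ℂ)
    {g g' : α → Fin k → ℂ → ℂ} (h : ∀ σ, g σ = g' σ) :
    sumProd c g = sumProd c g' := by
  funext x
  unfold sumProd
  exact Finset.sum_congr rfl fun σ _ => by rw [h σ]

lemma prod_coord_inner {k : ℕ} (h : Fin k → ℂ → ℂ) (x : Fin k → ℂ) (i : Fin k) (t : ℂ) :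
    ∏ j, h j (Function.update x i t j)
      = h i t * ∏ j ∈ univ.erase i, h j (x j) := by
  rw [← Finset.mul_prod_erase univ (fun j => h j (Function.update x i t j)) (mem_univ i)]
  simp only [Function.update_self]
  congr 1
  refine Finset.prod_congr rfl fun j hj => ?_
  rw [Function.update_of_ne (Finset.ne_of_mem_erase hj)]

lemma prod_coord_update {k : ℕ} (h : Fin k → ℂ → ℂ) (x : Fin k → ℂ) (i : Fin k)
    (a : ℂ → ℂ) :
    ∏ j, Function.update h i a j (x j)
      = a (x i) * ∏ j ∈ univ.erase i, h j (x j) := by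
  rw [← Finset.mul_prod_erase univ (fun j => Function.update h i a j (x j)) (mem_univ i)]
  simp only [Function.update_self]
  congr 1
  refine Finset.prod_congr rfl fun j hj => ?_
  rw [Function.update_of_ne (Finset.ne_of_mem_erase hj)]

lemma pderivCoord_sumProd {k : ℕ} {α : Type*} [Fintype α] (c : α → ℂ)
    (g : α → Fin k → ℂ → ℂ) (i : Fin k)
    (hg : ∀ σ, Differentiable ℂ (g σ i)) :
    pderivCoord i (sumProd c g)
      = sumProd c (fun σ => Function.update (g σ) i (deriv (g σ i))) := by
  funext x
  unfold pderivCoord sumProd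
  have h1 : (fun t => ∑ σ : α, c σ * ∏ j, g σ j (Function.update x i t j))
      = fun t => ∑ σ : α, c σ * (g σ i t * ∏ j ∈ univ.erase i, g σ j (x j)) := by
    funext t
    refine Finset.sum_congr rfl fun σ _ => ?_
    rw [prod_coord_inner]
  rw [h1]
  have h2 : ∀ σ : α, DifferentiableAt ℂ
      (fun t => c σ * (g σ i t * ∏ j ∈ univ.erase i, g σ j (x j))) (x i) := by
    intro σ
    exact (((hg σ).differentiableAt.mul_const _).const_mul _)
  rw [deriv_fun_sum (fun σ _ => h2 σ)]
  refine Finset.sum_congr rfl fun σ _ => ?_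
  rw [deriv_const_mul _ (((hg σ).differentiableAt).mul_const _),
    deriv_mul_const (hg σ).differentiableAt, prod_coord_update]

lemma iterate_pderivCoord_sumProd {k : ℕ} {α : Type*} [Fintype α] (c : α → ℂ)
    (g : α → Fin k → ℂ → ℂ) (i : Fin k) (m : ℕ)
    (hg : ∀ σ, ∀ j < m, Differentiable ℂ (deriv^[j] (g σ i))) :
    (pderivCoord i)^[m] (sumProd c g)
      = sumProd c (fun σ => Function.update (g σ) i (deriv^[m] (g σ i))) := by
  induction m with
  | zero =>
    simp only [Function.iterate_zero, id_eq]
    exact sumProd_congr c fun σ => by simp [Function.update_eq_self]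
  | succ n ih =>
    rw [Function.iterate_succ_apply', ih (fun σ j hj => hg σ j (hj.trans n.lt_succ_self)),
      pderivCoord_sumProd c _ i (fun σ => by simpa using hg σ n n.lt_succ_self)]
    refine sumProd_congr c fun σ => ?_
    rw [Function.update_self, Function.update_idem]
    have h3 : deriv (deriv^[n] (g σ i)) = deriv^[n + 1] (g σ i) :=
      (Function.iterate_succ_apply' deriv n (g σ i)).symm
    rw [h3]

lemma foldr_sumProd {k : ℕ} {α : Type*} [Fintype α] (c : α → ℂ)
    (g : α → Fin k → ℂ → ℂ) (m : Fin k → ℕ) (l : List (Fin k)) (hl : l.Nodup)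
    (hg : ∀ σ i, i ∈ l → ∀ j < m i, Differentiable ℂ (deriv^[j] (g σ i))) :
    (l.foldr (fun i F => (pderivCoord i)^[m i] ∘ F) id) (sumProd c g)
      = sumProd c (fun σ i => if i ∈ l then deriv^[m i] (g σ i) else g σ i) := by
  induction l with
  | nil => simp [sumProd]
  | cons i l ih =>
    have hnd := List.nodup_cons.mp hl
    have hstep := ih hnd.2 (fun σ j hj hlt => hg σ j (List.mem_cons_of_mem i hj) hlt)
    simp only [List.foldr_cons, Function.comp_apply]
    rw [hstep, iterate_pderivCoord_sumProd c _ i (m i) (fun σ j hj => by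
      simp only [if_neg hnd.1]
      exact hg σ i (List.mem_cons_self) j hj)]
    refine sumProd_congr c fun σ => ?_
    funext j
    by_cases hji : j = i
    · subst hji
      simp [Function.update_self, if_neg hnd.1]
    · rw [Function.update_of_ne hji]
      simp only [List.mem_cons]
      by_cases hjl : j ∈ l <;> simp [hjl, hji]

lemma applyPows_sumProd {k : ℕ} {α : Type*} [Fintype α] (c : α → ℂ)
    (g : α → Fin k → ℂ → ℂ) (m : Fin k → ℕ)
    (hg : ∀ σ i, ∀ j < m i, Differentiable ℂ (deriv^[j] (g σ i))) :
    applyPows m (sumProd c g)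
      = sumProd c (fun σ i => deriv^[m i] (g σ i)) := by
  unfold applyPows
  rw [foldr_sumProd c g m _ (List.nodup_finRange k) (fun σ i _ => hg σ i)]
  exact sumProd_congr c fun σ => by
    funext i
    simp [List.mem_finRange]

theorem stmt_5 (k : ℕ) (hk : 1 ≤ k) (f : ℂ → ℂ) (hf : ContDiff ℂ ((2 * k - 2 : ℕ)) f)
    (L : ℂ) :
    vandermondeOp (vandermondeOp (fun x => ∏ i, f (x i))) (fun _ : Fin k => L)
      = (Nat.factorial k : ℂ) *
          Matrix.det (Matrix.of fun i j : Fin k => iteratedDeriv ((i : ℕ) + (j : ℕ)) f L) := by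
  classical
  have hD : ∀ n : ℕ, n < 2 * k - 2 → Differentiable ℂ (deriv^[n] f) := by
    intro n hn
    rw [← iteratedDeriv_eq_iterate]
    exact hf.differentiable_iteratedDeriv n (by exact_mod_cast hn)
  set c1 : Equiv.Perm (Fin k) → ℂ := fun σ => ((Equiv.Perm.sign σ : ℤ) : ℂ) with hc1
  -- first application
  have e1 : vandermondeOp (fun x : Fin k → ℂ => ∏ i, f (x i))
      = sumProd c1 (fun σ i => deriv^[(σ i : ℕ)] f) := by
    have e0 : (fun x : Fin k → ℂ => ∏ i, f (x i))
        = sumProd (fun _ : Unit => (1 : ℂ)) (fun _ _ => f) := by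
      funext x; simp [sumProd]
    funext x
    unfold vandermondeOp
    rw [e0]
    have hap : ∀ σ : Equiv.Perm (Fin k),
        applyPows (fun i => (σ i : ℕ)) (sumProd (fun _ : Unit => (1 : ℂ)) (fun _ _ => f))
          = sumProd (fun _ : Unit => (1 : ℂ)) (fun _ i => deriv^[(σ i : ℕ)] f) := by
      intro σ
      exact applyPows_sumProd _ _ _ (fun u i j hj => hD j (by
        have := (σ i).isLt; omega))
    simp only [hap]
    simp [sumProd, hc1, zsmul_eq_mul]
  rw [e1]
  -- second application
  have e2 : ∀ τ : Equiv.Perm (Fin k),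
      applyPows (fun i => (τ i : ℕ)) (sumProd c1 (fun σ i => deriv^[(σ i : ℕ)] f))
        = sumProd c1 (fun σ i => deriv^[(τ i : ℕ) + (σ i : ℕ)] f) := by
    intro τ
    rw [applyPows_sumProd c1 _ _ (fun σ i j hj => by
      rw [← Function.iterate_add_apply]
      exact hD (j + σ i) (by
        have h1 := (σ i).isLt; have h2 := (τ i).isLt; omega))]
    refine sumProd_congr c1 fun σ => ?_
    funext i
    rw [← Function.iterate_add_apply]
  unfold vandermondeOp
  simp only [e2]
  unfold sumProd
  -- now pure algebra
  have sign_sq : ∀ τ ρ : Equiv.Perm (Fin k),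
      ((Equiv.Perm.sign τ : ℤ) : ℂ) * ((Equiv.Perm.sign (ρ * τ) : ℤ) : ℂ)
        = ((Equiv.Perm.sign ρ : ℤ) : ℂ) := by
    intro τ ρ
    rw [Equiv.Perm.sign_mul]
    rcases Int.units_eq_one_or (Equiv.Perm.sign τ) with h | h <;>
      rcases Int.units_eq_one_or (Equiv.Perm.sign ρ) with h' | h' <;>
        simp [h, h']
  have key : ∀ τ : Equiv.Perm (Fin k),
      (Equiv.Perm.sign τ : ℤ) •
        (∑ σ : Equiv.Perm (Fin k), c1 σ * ∏ i, deriv^[(τ i : ℕ) + (σ i : ℕ)] f L)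
      = ∑ ρ : Equiv.Perm (Fin k), c1 ρ * ∏ i, deriv^[(ρ i : ℕ) + (i : ℕ)] f L := by
    intro τ
    rw [Finset.smul_sum]
    refine (Fintype.sum_equiv (Equiv.mulRight τ)
      (fun ρ => c1 ρ * ∏ i, deriv^[(ρ i : ℕ) + (i : ℕ)] f L)
      (fun σ => (Equiv.Perm.sign τ : ℤ) • (c1 σ * ∏ i, deriv^[(τ i : ℕ) + (σ i : ℕ)] f L))
      fun ρ => ?_).symm
    simp only [Equiv.coe_mulRight, zsmul_eq_mul]
    have hprod : ∏ i, deriv^[(τ i : ℕ) + (((ρ * τ) i : Fin k) : ℕ)] f L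
        = ∏ i, deriv^[(ρ i : ℕ) + (i : ℕ)] f L := by
      refine (Fintype.prod_equiv τ⁻¹
        (fun j => deriv^[(ρ j : ℕ) + (j : ℕ)] f L)
        (fun i => deriv^[(τ i : ℕ) + (((ρ * τ) i : Fin k) : ℕ)] f L)
        fun j => ?_).symm
      simp [Equiv.Perm.mul_apply, Nat.add_comm]
    rw [hprod, ← mul_assoc, hc1, sign_sq τ ρ]
  simp only [key, Finset.sum_const, Finset.card_univ, Fintype.card_perm, Fintype.card_fin,
    nsmul_eq_mul]
  rw [Matrix.det_apply, Finset.mul_sum, Finset.mul_sum]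
  refine Finset.sum_congr rfl fun ρ _ => ?_
  simp [Matrix.of_apply, iteratedDeriv_eq_iterate, hc1, Units.smul_def, zsmul_eq_mul]
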